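/- arXiv:0709.2337 — 2 statements merged into one kernel-verified Lean document; each statement's English description precedes it below -/
import Mathlib

section
/- Let Ω = (a,b) × (c,d) ⊆ ℝ² be an open rectangle containing (x₀,t₀), ν : Ω → ℝ, and let f : Ω → ℝ be a positive twice continuously differentiable solution of f_xx − f_tt = νf on Ω; set η = −ν + 2(f_x² − f_t²)/f². Let v : Ω → ℝ be a twice continuously differentiable solution of v_xx − v_tt = ηv on Ω. Write j·f⁻²·∂_z̄(f·v) = Φ₁ + jΦ₂, and for a real constant c define u(x,t) = −f(x,t)·[2(∫_{x₀}^{x} Φ₁(η′,t) dη′ − ∫_{t₀}^{t} Φ₂(x₀,ξ) dξ) + c]. Then W = u + jv satisfies the main Vekua equation W_z̄ = (f_z̄/f)·W̄ on Ω and u satisfies the Klein-Gordon equation u_xx − u_tt = νu on Ω; moreover u is unique up to an additive term c·f with c a real constant. -/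
noncomputable section

open Filter Topology MeasureTheory

/-- Hyperbolic (duplex) numbers 𝔻, modeled as pairs `(Re z, Im z)` with `j ^ 2 = 1`. -/
abbrev Hyp : Type := ℝ × ℝ

/-- Real part of a hyperbolic number. -/
def hre (a : Hyp) : ℝ := a.1

/-- Imaginary part of a hyperbolic number. -/
def him (a : Hyp) : ℝ := a.2

/-- The hyperbolic imaginary unit `j`. -/
def hj : Hyp := (0, 1)

/-- Hyperbolic multiplication: `(x+tj)(x'+t'j) = (xx'+tt') + (xt'+tx')j`. -/
def hmul (a b : Hyp) : Hyp := (a.1 * b.1 + a.2 * b.2, a.1 * b.2 + a.2 * b.1)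

/-- Hyperbolic conjugation: `conj (x+tj) = x - tj`. -/
def hconj (a : Hyp) : Hyp := (a.1, -a.2)

/-- Invertibility of a hyperbolic number: `x² ≠ t²`. -/
def IsInv (a : Hyp) : Prop := a.1 ^ 2 ≠ a.2 ^ 2

/-- Hyperbolic inverse `z⁻¹ = z̄ / |z|²` with `|z|² = x² - t²`. -/
def hinv (a : Hyp) : Hyp := (a.1 / (a.1 ^ 2 - a.2 ^ 2), -a.2 / (a.1 ^ 2 - a.2 ^ 2))

/-- Hyperbolic division. -/
def hdiv (a b : Hyp) : Hyp := hmul a (hinv b)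

/-- Partial derivative in the first (`x`) variable. -/
def pdx (g : Hyp → ℝ) (p : Hyp) : ℝ := deriv (fun s => g (s, p.2)) p.1

/-- Partial derivative in the second (`t`) variable. -/
def pdt (g : Hyp → ℝ) (p : Hyp) : ℝ := deriv (fun s => g (p.1, s)) p.2

/-- The wave operator `□g = g_xx - g_tt`. -/
def waveOp (g : Hyp → ℝ) (p : Hyp) : ℝ := pdx (pdx g) p - pdt (pdt g) p

/-- `w_z = ½(∂_x + j ∂_t) w = ½((u_x+v_t) + (v_x+u_t)j)` for a 𝔻-valued `w = u + jv`. -/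
def dz (w : Hyp → Hyp) (p : Hyp) : Hyp :=
  ((pdx (fun q => (w q).1) p + pdt (fun q => (w q).2) p) / 2,
   (pdx (fun q => (w q).2) p + pdt (fun q => (w q).1) p) / 2)

/-- `w_z̄ = ½(∂_x - j ∂_t) w = ½((u_x-v_t) + (v_x-u_t)j)` for a 𝔻-valued `w = u + jv`. -/
def dzbar (w : Hyp → Hyp) (p : Hyp) : Hyp :=
  ((pdx (fun q => (w q).1) p - pdt (fun q => (w q).2) p) / 2,
   (pdx (fun q => (w q).2) p - pdt (fun q => (w q).1) p) / 2)

/-- `f_z = ½(f_x + j f_t)` for a real-valued `f`. -/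
def rz (f : Hyp → ℝ) (p : Hyp) : Hyp := (pdx f p / 2, pdt f p / 2)

/-- `f_z̄ = ½(f_x - j f_t)` for a real-valued `f`. -/
def rzbar (f : Hyp → ℝ) (p : Hyp) : Hyp := (pdx f p / 2, -(pdt f p) / 2)

/-- 𝔻-differentiability at `z₀`: the difference quotient `(f z - f z₀)·(z - z₀)⁻¹`
tends to `d` as `z → z₀` through points with `z - z₀` invertible. -/
def HasHDerivAt (f : Hyp → Hyp) (d : Hyp) (z₀ : Hyp) : Prop :=
  Filter.Tendsto (fun z => hmul (f z - f z₀) (hinv (z - z₀)))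
    (nhdsWithin z₀ {z | IsInv (z - z₀)}) (nhds d)

/-- `F Ḡ - F̄ G`. -/
def pairDenom (F G : Hyp → Hyp) (z : Hyp) : Hyp :=
  hmul (F z) (hconj (G z)) - hmul (hconj (F z)) (G z)

/-- Characteristic coefficient `a_(F,G) = -(F̄ G_z̄ - F_z̄ Ḡ)/(F Ḡ - F̄ G)`. -/
def aFG (F G : Hyp → Hyp) (z : Hyp) : Hyp :=
  - hdiv (hmul (hconj (F z)) (dzbar G z) - hmul (dzbar F z) (hconj (G z))) (pairDenom F G z)

/-- Characteristic coefficient `b_(F,G) = (F G_z̄ - F_z̄ G)/(F Ḡ - F̄ G)`. -/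
def bFG (F G : Hyp → Hyp) (z : Hyp) : Hyp :=
  hdiv (hmul (F z) (dzbar G z) - hmul (dzbar F z) (G z)) (pairDenom F G z)

/-- Characteristic coefficient `A_(F,G) = -(F̄ G_z - F_z Ḡ)/(F Ḡ - F̄ G)`. -/
def AFG (F G : Hyp → Hyp) (z : Hyp) : Hyp :=
  - hdiv (hmul (hconj (F z)) (dz G z) - hmul (dz F z) (hconj (G z))) (pairDenom F G z)

/-- Characteristic coefficient `B_(F,G) = (F G_z - F_z G)/(F Ḡ - F̄ G)`. -/
def BFG (F G : Hyp → Hyp) (z : Hyp) : Hyp :=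
  hdiv (hmul (F z) (dz G z) - hmul (dz F z) (G z)) (pairDenom F G z)

/-- A generating pair on `Ω`: twice continuously differentiable `F, G` with `Im(F̄G) ≠ 0`. -/
def IsGenPair (F G : Hyp → Hyp) (Ω : Set Hyp) : Prop :=
  ContDiffOn ℝ 2 F Ω ∧ ContDiffOn ℝ 2 G Ω ∧ ∀ z ∈ Ω, him (hmul (hconj (F z)) (G z)) ≠ 0

/-- The idempotent `e₁ = (1+j)/2`. -/
def e1 : Hyp := (1/2, 1/2)

/-- The idempotent `e₂ = (1-j)/2`. -/
def e2 : Hyp := (1/2, -1/2)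

/-- Contour integral `∮_{∂R} h dz` over the counterclockwise boundary of the rectangle
`[x₁,x₂] × [t₁,t₂]`, with hyperbolic multiplication (`dz = dx` on horizontal sides,
`dz = j dt` on vertical sides). -/
def rectContourInt (h : Hyp → Hyp) (x₁ x₂ t₁ t₂ : ℝ) : Hyp :=
  ((∫ x in x₁..x₂, h (x, t₁)) - ∫ x in x₁..x₂, h (x, t₂)) +
    hmul hj ((∫ t in t₁..t₂, h (x₂, t)) - ∫ t in t₁..t₂, h (x₁, t))

/-- Integral `∫_{[z₀,z]} h dζ` along the straight segment from `z₀` to `z`,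
with hyperbolic multiplication. -/
def segInt (h : Hyp → Hyp) (z₀ z : Hyp) : Hyp :=
  ∫ s in (0:ℝ)..1, hmul (h (z₀ + s • (z - z₀))) (z - z₀)

/-- Natural powers in 𝔻. -/
def hpow (a : Hyp) : ℕ → Hyp
  | 0 => (1, 0)
  | n + 1 => hmul a (hpow a n)

/-- Integer powers in 𝔻 (for invertible base). -/
def hzpow (a : Hyp) : ℤ → Hyp
  | Int.ofNat n => hpow a n
  | Int.negSucc n => hinv (hpow a (n + 1))

lemma slicex_hasDerivAt {g : Hyp → ℝ} {p : Hyp} (h : DifferentiableAt ℝ g p) :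
    HasDerivAt (fun s => g (s, p.2)) (pdx g p) p.1 := by
  have hd : DifferentiableAt ℝ (fun s : ℝ => g (s, p.2)) p.1 := by
    have := h.comp p.1 (by fun_prop : DifferentiableAt ℝ (fun s : ℝ => ((s, p.2) : Hyp)) p.1)
    exact this
  exact hd.hasDerivAt

lemma slicet_hasDerivAt {g : Hyp → ℝ} {p : Hyp} (h : DifferentiableAt ℝ g p) :
    HasDerivAt (fun s => g (p.1, s)) (pdt g p) p.2 := by
  have hd : DifferentiableAt ℝ (fun s : ℝ => g (p.1, s)) p.2 := by
    have := h.comp p.2 (by fun_prop : DifferentiableAt ℝ (fun s : ℝ => ((p.1, s) : Hyp)) p.2)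
    exact this
  exact hd.hasDerivAt

lemma pdx_eq_fderiv {g : Hyp → ℝ} {p : Hyp} (h : DifferentiableAt ℝ g p) :
    pdx g p = fderiv ℝ g p (1, 0) := by
  have hline : HasDerivAt (fun s : ℝ => ((s, p.2) : Hyp)) (1, 0) p.1 :=
    HasDerivAt.prodMk (hasDerivAt_id p.1) (hasDerivAt_const p.1 p.2)
  have := h.hasFDerivAt.comp_hasDerivAt p.1 (by simpa using hline)
  exact this.deriv

lemma pdt_eq_fderiv {g : Hyp → ℝ} {p : Hyp} (h : DifferentiableAt ℝ g p) :
    pdt g p = fderiv ℝ g p (0, 1) := by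
  have hline : HasDerivAt (fun s : ℝ => ((p.1, s) : Hyp)) (0, 1) p.2 :=
    HasDerivAt.prodMk (hasDerivAt_const p.2 p.1) (hasDerivAt_id p.2)
  have := h.hasFDerivAt.comp_hasDerivAt p.2 (by simpa using hline)
  exact this.deriv



lemma diffAt_of_contDiffOn1 {Ω : Set Hyp} (hΩo : IsOpen Ω) {F : Type*} [NormedAddCommGroup F]
    [NormedSpace ℝ F] {g : Hyp → F} (hg : ContDiffOn ℝ 1 g Ω) {p : Hyp}
    (hp : p ∈ Ω) : DifferentiableAt ℝ g p :=
  (hg.differentiableOn one_ne_zero).differentiableAt (hΩo.mem_nhds hp)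

lemma fderiv_contDiffOn1 {Ω : Set Hyp} (hΩo : IsOpen Ω) {g : Hyp → ℝ}
    (hg : ContDiffOn ℝ 2 g Ω) : ContDiffOn ℝ 1 (fderiv ℝ g) Ω := by
  have h2 : ContDiffOn ℝ (1+1) g Ω := by norm_num; exact hg
  exact ((contDiffOn_succ_iff_fderiv_of_isOpen hΩo).1 h2).2.2


lemma diffAt_pdx {Ω : Set Hyp} (hΩo : IsOpen Ω) {g : Hyp → ℝ} (hg : ContDiffOn ℝ 2 g Ω) {p : Hyp} (hp : p ∈ Ω) :
    DifferentiableAt ℝ (pdx g) p := by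
  have h1 : DifferentiableAt ℝ (fun q => fderiv ℝ g q ((1:ℝ),(0:ℝ))) p :=
    diffAt_of_contDiffOn1 hΩo ((fderiv_contDiffOn1 hΩo hg).clm_apply contDiffOn_const) hp
  apply h1.congr_of_eventuallyEq
  filter_upwards [hΩo.mem_nhds hp] with q hq
  exact pdx_eq_fderiv (diffAt_of_contDiffOn1 hΩo (hg.of_le (by norm_num)) hq)

lemma diffAt_pdt {Ω : Set Hyp} (hΩo : IsOpen Ω) {g : Hyp → ℝ} (hg : ContDiffOn ℝ 2 g Ω) {p : Hyp} (hp : p ∈ Ω) :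
    DifferentiableAt ℝ (pdt g) p := by
  have h1 : DifferentiableAt ℝ (fun q => fderiv ℝ g q ((0:ℝ),(1:ℝ))) p :=
    diffAt_of_contDiffOn1 hΩo ((fderiv_contDiffOn1 hΩo hg).clm_apply contDiffOn_const) hp
  apply h1.congr_of_eventuallyEq
  filter_upwards [hΩo.mem_nhds hp] with q hq
  exact pdt_eq_fderiv (diffAt_of_contDiffOn1 hΩo (hg.of_le (by norm_num)) hq)


lemma slicex_mem_nhds {Ω : Set Hyp} (hΩo : IsOpen Ω) {p : Hyp} (hp : p ∈ Ω) : ∀ᶠ s in 𝓝 p.1, ((s, p.2) : Hyp) ∈ Ω := by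
  have hc : ContinuousAt (fun s : ℝ => ((s, p.2) : Hyp)) p.1 := by fun_prop
  exact hc.preimage_mem_nhds (by simpa using hΩo.mem_nhds hp)

lemma slicet_mem_nhds {Ω : Set Hyp} (hΩo : IsOpen Ω) {p : Hyp} (hp : p ∈ Ω) : ∀ᶠ s in 𝓝 p.2, ((p.1, s) : Hyp) ∈ Ω := by
  have hc : ContinuousAt (fun s : ℝ => ((p.1, s) : Hyp)) p.2 := by fun_prop
  exact hc.preimage_mem_nhds (by simpa using hΩo.mem_nhds hp)

lemma pdx_pdt_symm {Ω : Set Hyp} (hΩo : IsOpen Ω) {g : Hyp → ℝ} (hg : ContDiffOn ℝ 2 g Ω) {p : Hyp} (hp : p ∈ Ω) :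
    pdx (pdt g) p = pdt (pdx g) p := by
  set G := fderiv ℝ g with hG
  have hGd : DifferentiableAt ℝ G p := diffAt_of_contDiffOn1 hΩo (fderiv_contDiffOn1 hΩo hg) hp
  have hsymm : ∀ v w : Hyp, fderiv ℝ G p v w = fderiv ℝ G p w v := by
    have hca : ContDiffAt ℝ 2 g p := (hg.contDiffAt (hΩo.mem_nhds hp))
    exact hca.isSymmSndFDerivAt (by simp)
  have h01 : DifferentiableAt ℝ (fun q => G q ((0:ℝ),(1:ℝ))) p :=
    hGd.clm_apply (differentiableAt_const _)
  have h10 : DifferentiableAt ℝ (fun q => G q ((1:ℝ),(0:ℝ))) p :=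
    hGd.clm_apply (differentiableAt_const _)
  have e1 : pdx (pdt g) p = pdx (fun q => G q ((0:ℝ),(1:ℝ))) p := by
    unfold pdx
    apply Filter.EventuallyEq.deriv_eq
    filter_upwards [slicex_mem_nhds hΩo hp] with s hs
    exact pdt_eq_fderiv (diffAt_of_contDiffOn1 hΩo (hg.of_le (by norm_num)) hs)
  have e2 : pdt (pdx g) p = pdt (fun q => G q ((1:ℝ),(0:ℝ))) p := by
    unfold pdt
    apply Filter.EventuallyEq.deriv_eq
    filter_upwards [slicet_mem_nhds hΩo hp] with s hs
    exact pdx_eq_fderiv (diffAt_of_contDiffOn1 hΩo (hg.of_le (by norm_num)) hs)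
  rw [e1, e2, pdx_eq_fderiv h01, pdt_eq_fderiv h10,
    fderiv_clm_apply hGd (differentiableAt_const _), fderiv_clm_apply hGd (differentiableAt_const _)]
  simp [hsymm ((0:ℝ),(1:ℝ)) ((1:ℝ),(0:ℝ))]


lemma pdx_mul {f v : Hyp → ℝ} {p : Hyp} (hf : DifferentiableAt ℝ f p)
    (hv : DifferentiableAt ℝ v p) :
    pdx (fun q => f q * v q) p = pdx f p * v p + f p * pdx v p :=
  ((slicex_hasDerivAt hf).mul (slicex_hasDerivAt hv)).deriv

lemma pdt_mul {f v : Hyp → ℝ} {p : Hyp} (hf : DifferentiableAt ℝ f p)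
    (hv : DifferentiableAt ℝ v p) :
    pdt (fun q => f q * v q) p = pdt f p * v p + f p * pdt v p :=
  ((slicet_hasDerivAt hf).mul (slicet_hasDerivAt hv)).deriv


lemma pdxx_mul {Ω : Set Hyp} (hΩo : IsOpen Ω) {f v : Hyp → ℝ} (hf : ContDiffOn ℝ 2 f Ω) (hv : ContDiffOn ℝ 2 v Ω)
    {p : Hyp} (hp : p ∈ Ω) :
    pdx (pdx (fun q => f q * v q)) p =
      pdx (pdx f) p * v p + 2 * pdx f p * pdx v p + f p * pdx (pdx v) p := by
  have h1 : ContDiffOn ℝ 1 f Ω := hf.of_le (by norm_num)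
  have h2 : ContDiffOn ℝ 1 v Ω := hv.of_le (by norm_num)
  have key : deriv (fun s => pdx (fun q => f q * v q) (s, p.2)) p.1 =
      deriv (fun s => pdx f (s, p.2) * v (s, p.2) + f (s, p.2) * pdx v (s, p.2)) p.1 := by
    apply Filter.EventuallyEq.deriv_eq
    filter_upwards [slicex_mem_nhds hΩo hp] with s hs
    exact pdx_mul (diffAt_of_contDiffOn1 hΩo h1 hs) (diffAt_of_contDiffOn1 hΩo h2 hs)
  have hD : HasDerivAt (fun s => pdx f (s, p.2) * v (s, p.2) + f (s, p.2) * pdx v (s, p.2))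
      (pdx (pdx f) p * v p + pdx f p * pdx v p + (pdx f p * pdx v p + f p * pdx (pdx v) p)) p.1 :=
    ((slicex_hasDerivAt (diffAt_pdx hΩo hf hp)).mul
        (slicex_hasDerivAt (diffAt_of_contDiffOn1 hΩo h2 hp))).add
      ((slicex_hasDerivAt (diffAt_of_contDiffOn1 hΩo h1 hp)).mul
        (slicex_hasDerivAt (diffAt_pdx hΩo hv hp)))
  have := hD.deriv
  show deriv (fun s => pdx (fun q => f q * v q) (s, p.2)) p.1 = _
  rw [key, this]; ring

lemma pdtt_mul {Ω : Set Hyp} (hΩo : IsOpen Ω) {f v : Hyp → ℝ} (hf : ContDiffOn ℝ 2 f Ω) (hv : ContDiffOn ℝ 2 v Ω)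
    {p : Hyp} (hp : p ∈ Ω) :
    pdt (pdt (fun q => f q * v q)) p =
      pdt (pdt f) p * v p + 2 * pdt f p * pdt v p + f p * pdt (pdt v) p := by
  have h1 : ContDiffOn ℝ 1 f Ω := hf.of_le (by norm_num)
  have h2 : ContDiffOn ℝ 1 v Ω := hv.of_le (by norm_num)
  have key : deriv (fun s => pdt (fun q => f q * v q) (p.1, s)) p.2 =
      deriv (fun s => pdt f (p.1, s) * v (p.1, s) + f (p.1, s) * pdt v (p.1, s)) p.2 := by
    apply Filter.EventuallyEq.deriv_eq
    filter_upwards [slicet_mem_nhds hΩo hp] with s hs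
    exact pdt_mul (diffAt_of_contDiffOn1 hΩo h1 hs) (diffAt_of_contDiffOn1 hΩo h2 hs)
  have hD : HasDerivAt (fun s => pdt f (p.1, s) * v (p.1, s) + f (p.1, s) * pdt v (p.1, s))
      (pdt (pdt f) p * v p + pdt f p * pdt v p + (pdt f p * pdt v p + f p * pdt (pdt v) p)) p.2 :=
    ((slicet_hasDerivAt (diffAt_pdt hΩo hf hp)).mul
        (slicet_hasDerivAt (diffAt_of_contDiffOn1 hΩo h2 hp))).add
      ((slicet_hasDerivAt (diffAt_of_contDiffOn1 hΩo h1 hp)).mul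
        (slicet_hasDerivAt (diffAt_pdt hΩo hv hp)))
  have := hD.deriv
  show deriv (fun s => pdt (fun q => f q * v q) (p.1, s)) p.2 = _
  rw [key, this]; ring


lemma pdt_phi1_formula {Ω : Set Hyp} (hΩo : IsOpen Ω) {f F : Hyp → ℝ} (hf : ContDiffOn ℝ 2 f Ω) (hF : ContDiffOn ℝ 2 F Ω)
    {p : Hyp} (hp : p ∈ Ω) (hfne : f p ≠ 0) :
    pdt (fun q => -(1 / (2 * f q ^ 2)) * pdt F q) p =
      -(pdt (pdt F) p) / (2 * f p ^ 2) + pdt F p * pdt f p / f p ^ 3 := by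
  have hf1 : ContDiffOn ℝ 1 f Ω := hf.of_le (by norm_num)
  have hfs : HasDerivAt (fun s => f (p.1, s)) (pdt f p) p.2 :=
    slicet_hasDerivAt (diffAt_of_contDiffOn1 hΩo hf1 hp)
  have hFs : HasDerivAt (fun s => pdt F (p.1, s)) (pdt (pdt F) p) p.2 :=
    slicet_hasDerivAt (diffAt_pdt hΩo hF hp)
  have hden : HasDerivAt (fun s => 2 * f (p.1, s) ^ 2) (2 * ((2:ℕ) * f p ^ 1 * pdt f p)) p.2 :=
    (hfs.pow 2).const_mul 2
  have hdne : 2 * f p ^ 2 ≠ 0 := by positivity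
  have hq : HasDerivAt (fun s => 1 / (2 * f (p.1, s) ^ 2))
      ((0 * (2 * f p ^ 2) - 1 * (2 * ((2:ℕ) * f p ^ 1 * pdt f p))) / (2 * f p ^ 2) ^ 2) p.2 :=
    (hasDerivAt_const p.2 (1:ℝ)).div hden hdne
  have hD : deriv (fun s => -(1 / (2 * f (p.1, s) ^ 2)) * pdt F (p.1, s)) p.2 = _ :=
    (hq.fun_neg.fun_mul hFs).deriv
  show deriv (fun s => -(1 / (2 * f (p.1, s) ^ 2)) * pdt F (p.1, s)) p.2 = _
  rw [hD]; field_simp; ring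

lemma pdx_phi2_formula {Ω : Set Hyp} (hΩo : IsOpen Ω) {f F : Hyp → ℝ} (hf : ContDiffOn ℝ 2 f Ω) (hF : ContDiffOn ℝ 2 F Ω)
    {p : Hyp} (hp : p ∈ Ω) (hfne : f p ≠ 0) :
    pdx (fun q => (1 / (2 * f q ^ 2)) * pdx F q) p =
      pdx (pdx F) p / (2 * f p ^ 2) - pdx F p * pdx f p / f p ^ 3 := by
  have hf1 : ContDiffOn ℝ 1 f Ω := hf.of_le (by norm_num)
  have hfs : HasDerivAt (fun s => f (s, p.2)) (pdx f p) p.1 :=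
    slicex_hasDerivAt (diffAt_of_contDiffOn1 hΩo hf1 hp)
  have hFs : HasDerivAt (fun s => pdx F (s, p.2)) (pdx (pdx F) p) p.1 :=
    slicex_hasDerivAt (diffAt_pdx hΩo hF hp)
  have hden : HasDerivAt (fun s => 2 * f (s, p.2) ^ 2) (2 * ((2:ℕ) * f p ^ 1 * pdx f p)) p.1 :=
    (hfs.pow 2).const_mul 2
  have hdne : 2 * f p ^ 2 ≠ 0 := by positivity
  have hq : HasDerivAt (fun s => 1 / (2 * f (s, p.2) ^ 2))
      ((0 * (2 * f p ^ 2) - 1 * (2 * ((2:ℕ) * f p ^ 1 * pdx f p))) / (2 * f p ^ 2) ^ 2) p.1 :=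
    (hasDerivAt_const p.1 (1:ℝ)).div hden hdne
  have hD : deriv (fun s => (1 / (2 * f (s, p.2) ^ 2)) * pdx F (s, p.2)) p.1 = _ :=
    (hq.mul hFs).deriv
  show deriv (fun s => (1 / (2 * f (s, p.2) ^ 2)) * pdx F (s, p.2)) p.1 = _
  rw [hD]; field_simp; ring

/-- compatibility: `∂ₜΦ₁ + ∂ₓΦ₂ = 0`. -/
lemma compat {Ω : Set Hyp} (hΩo : IsOpen Ω) {ν f v : Hyp → ℝ} (hf : ContDiffOn ℝ 2 f Ω) (hfpos : ∀ p ∈ Ω, 0 < f p)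
    (hKG : ∀ p ∈ Ω, waveOp f p = ν p * f p) (hv : ContDiffOn ℝ 2 v Ω)
    (hvKG : ∀ p ∈ Ω, waveOp v p =
      (-ν p + 2 * ((pdx f p) ^ 2 - (pdt f p) ^ 2) / (f p) ^ 2) * v p)
    {p : Hyp} (hp : p ∈ Ω) :
    pdt (fun q => -(1 / (2 * f q ^ 2)) * pdt (fun q' => f q' * v q') q) p
      + pdx (fun q => (1 / (2 * f q ^ 2)) * pdx (fun q' => f q' * v q') q) p = 0 := by
  have hF : ContDiffOn ℝ 2 (fun q => f q * v q) Ω := hf.mul hv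
  have hfne : f p ≠ 0 := (hfpos p hp).ne'
  have hf1 : ContDiffOn ℝ 1 f Ω := hf.of_le (by norm_num)
  have hv1 : ContDiffOn ℝ 1 v Ω := hv.of_le (by norm_num)
  have hfd := diffAt_of_contDiffOn1 hΩo hf1 hp
  have hvd := diffAt_of_contDiffOn1 hΩo hv1 hp
  rw [pdt_phi1_formula hΩo hf hF hp hfne, pdx_phi2_formula hΩo hf hF hp hfne,
    pdxx_mul hΩo hf hv hp, pdtt_mul hΩo hf hv hp, pdx_mul hfd hvd, pdt_mul hfd hvd]
  have h1 := hKG p hp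
  have h2 := hvKG p hp
  unfold waveOp at h1 h2
  set fx := pdx f p; set ft := pdt f p; set vx := pdx v p; set vt := pdt v p
  set fxx := pdx (pdx f) p; set ftt := pdt (pdt f) p
  set vxx := pdx (pdx v) p; set vtt := pdt (pdt v) p
  have h2' : vxx * f p ^ 2 - vtt * f p ^ 2 = -ν p * f p ^ 2 * v p + 2 * (fx ^ 2 - ft ^ 2) * v p := by
    field_simp at h2; linarith [h2]
  field_simp
  linear_combination f p * v p * h1 + h2'


variable {a b c d : ℝ}

lemma rect_isOpen : IsOpen (Set.Ioo a b ×ˢ Set.Ioo c d) := isOpen_Ioo.prod isOpen_Ioo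

lemma rect_mem_slice {x₀ x y t : ℝ} (hx₀ : x₀ ∈ Set.Ioo a b) (hx : x ∈ Set.Ioo a b)
    (ht : t ∈ Set.Ioo c d) (hy : y ∈ Set.uIcc x₀ x) :
    ((y, t) : Hyp) ∈ Set.Ioo a b ×ˢ Set.Ioo c d :=
  ⟨Set.ordConnected_Ioo.uIcc_subset hx₀ hx hy, ht⟩

lemma contOn_slice {Φ : Hyp → ℝ} (hΦ : ContinuousOn Φ (Set.Ioo a b ×ˢ Set.Ioo c d))
    {x₀ x t : ℝ} (hx₀ : x₀ ∈ Set.Ioo a b) (hx : x ∈ Set.Ioo a b) (ht : t ∈ Set.Ioo c d) :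
    ContinuousOn (fun y => Φ (y, t)) (Set.uIcc x₀ x) := by
  apply hΦ.comp (by fun_prop : Continuous (fun y : ℝ => ((y, t) : Hyp))).continuousOn
  intro y hy
  exact rect_mem_slice hx₀ hx ht hy

lemma hasDerivAt_int_param {Φ : Hyp → ℝ}
    (hΦ : ContDiffOn ℝ 1 Φ (Set.Ioo a b ×ˢ Set.Ioo c d))
    (hΦ' : ContinuousOn (pdt Φ) (Set.Ioo a b ×ˢ Set.Ioo c d))
    {x₀ x t : ℝ} (hx₀ : x₀ ∈ Set.Ioo a b) (hx : x ∈ Set.Ioo a b) (ht : t ∈ Set.Ioo c d) :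
    HasDerivAt (fun s => ∫ y in x₀..x, Φ (y, s)) (∫ y in x₀..x, pdt Φ (y, t)) t := by
  obtain ⟨ht1, ht2⟩ := ht
  set ε := min (t - c) (d - t) / 2 with hεdef
  have hε : 0 < ε := by
    have : 0 < min (t - c) (d - t) := lt_min (by linarith) (by linarith)
    positivity
  have hIcc : Set.Icc (t - ε) (t + ε) ⊆ Set.Ioo c d := by
    intro s hs
    have h1 : ε < t - c := by
      have := min_le_left (t - c) (d - t); simp only [hεdef]; linarith
    have h2 : ε < d - t := by
      have := min_le_right (t - c) (d - t); simp only [hεdef]; linarith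
    exact ⟨by linarith [hs.1], by linarith [hs.2]⟩
  have hball : Metric.ball t ε ⊆ Set.Icc (t - ε) (t + ε) := by
    intro s hs
    rw [Metric.mem_ball, Real.dist_eq] at hs
    constructor <;> [linarith [abs_lt.1 hs |>.1]; linarith [abs_lt.1 hs |>.2]]
  set K := Set.uIcc x₀ x ×ˢ Set.Icc (t - ε) (t + ε) with hKdef
  have hKsub : K ⊆ Set.Ioo a b ×ˢ Set.Ioo c d := fun q hq =>
    ⟨Set.ordConnected_Ioo.uIcc_subset hx₀ hx hq.1, hIcc hq.2⟩
  have hKc : IsCompact K := isCompact_uIcc.prod isCompact_Icc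
  obtain ⟨M, hM⟩ := hKc.exists_bound_of_continuousOn (hΦ'.mono hKsub)
  have hι : Set.uIoc x₀ x ⊆ Set.uIcc x₀ x := Set.Ioc_subset_Icc_self
  have hmemball : ∀ s ∈ Metric.ball t ε, s ∈ Set.Ioo c d := fun s hs => hIcc (hball hs)
  have main := intervalIntegral.hasDerivAt_integral_of_dominated_loc_of_deriv_le
    (F := fun s y => Φ (y, s)) (F' := fun s y => pdt Φ (y, s)) (bound := fun _ => M)
    (a := x₀) (b := x) (x₀ := t) (μ := volume) (Metric.ball_mem_nhds t hε)
    ?meas ?int ?meas' ?bound ?boundint ?diff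
  · exact main.2
  case meas =>
    filter_upwards [isOpen_Ioo.mem_nhds ⟨ht1, ht2⟩] with s hs
    exact ((contOn_slice (hΦ.continuousOn) hx₀ hx hs).mono hι).aestronglyMeasurable
      measurableSet_uIoc
  case int => exact (contOn_slice (hΦ.continuousOn) hx₀ hx ⟨ht1, ht2⟩).intervalIntegrable
  case meas' =>
    exact ((contOn_slice hΦ' hx₀ hx ⟨ht1, ht2⟩).mono hι).aestronglyMeasurable measurableSet_uIoc
  case bound =>
    apply Filter.Eventually.of_forall
    intro y hy s hs
    exact hM (y, s) ⟨hι hy, hball hs⟩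
  case boundint => exact intervalIntegrable_const
  case diff =>
    apply Filter.Eventually.of_forall
    intro y hy s hs
    have hmem : ((y, s) : Hyp) ∈ Set.Ioo a b ×ˢ Set.Ioo c d :=
      rect_mem_slice hx₀ hx (hmemball s hs) (hι hy)
    exact slicet_hasDerivAt (diffAt_of_contDiffOn1 rect_isOpen hΦ hmem)


variable {Ω : Set Hyp}

lemma contDiffOn1_pdx (hΩo : IsOpen Ω) {g : Hyp → ℝ} (hg : ContDiffOn ℝ 2 g Ω) :
    ContDiffOn ℝ 1 (pdx g) Ω :=
  ((fderiv_contDiffOn1 hΩo hg).clm_apply contDiffOn_const).congr fun p hp =>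
    pdx_eq_fderiv (diffAt_of_contDiffOn1 hΩo (hg.of_le (by norm_num)) hp)

lemma contDiffOn1_pdt (hΩo : IsOpen Ω) {g : Hyp → ℝ} (hg : ContDiffOn ℝ 2 g Ω) :
    ContDiffOn ℝ 1 (pdt g) Ω :=
  ((fderiv_contDiffOn1 hΩo hg).clm_apply contDiffOn_const).congr fun p hp =>
    pdt_eq_fderiv (diffAt_of_contDiffOn1 hΩo (hg.of_le (by norm_num)) hp)

lemma phi1_contDiffOn (hΩo : IsOpen Ω) {f v : Hyp → ℝ} (hf : ContDiffOn ℝ 2 f Ω)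
    (hv : ContDiffOn ℝ 2 v Ω) (hfpos : ∀ p ∈ Ω, 0 < f p) :
    ContDiffOn ℝ 1 (fun p => -(1 / (2 * f p ^ 2)) * pdt (fun q => f q * v q) p) Ω := by
  have h1 : ContDiffOn ℝ 1 (fun p => 1 / (2 * f p ^ 2)) Ω :=
    contDiffOn_const.div (contDiffOn_const.mul ((hf.of_le (by norm_num)).pow 2))
      (fun p hp => by have := (hfpos p hp).ne'; positivity)
  exact h1.neg.mul (contDiffOn1_pdt hΩo (hf.mul hv))

lemma phi2_contDiffOn (hΩo : IsOpen Ω) {f v : Hyp → ℝ} (hf : ContDiffOn ℝ 2 f Ω)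
    (hv : ContDiffOn ℝ 2 v Ω) (hfpos : ∀ p ∈ Ω, 0 < f p) :
    ContDiffOn ℝ 1 (fun p => (1 / (2 * f p ^ 2)) * pdx (fun q => f q * v q) p) Ω := by
  have h1 : ContDiffOn ℝ 1 (fun p => 1 / (2 * f p ^ 2)) Ω :=
    contDiffOn_const.div (contDiffOn_const.mul ((hf.of_le (by norm_num)).pow 2))
      (fun p hp => by have := (hfpos p hp).ne'; positivity)
  exact h1.mul (contDiffOn1_pdx hΩo (hf.mul hv))


lemma contOn_pdxR {Φ : Hyp → ℝ} (hΦ : ContDiffOn ℝ 1 Φ (Set.Ioo a b ×ˢ Set.Ioo c d)) :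
    ContinuousOn (pdx Φ) (Set.Ioo a b ×ˢ Set.Ioo c d) := by
  have h2 : ContDiffOn ℝ (0+1) Φ (Set.Ioo a b ×ˢ Set.Ioo c d) := by norm_num; exact hΦ
  have h1 : ContDiffOn ℝ 0 (fderiv ℝ Φ) (Set.Ioo a b ×ˢ Set.Ioo c d) :=
    ((contDiffOn_succ_iff_fderiv_of_isOpen rect_isOpen).1 h2).2.2
  exact ((h1.clm_apply (contDiffOn_const (c := ((1:ℝ),(0:ℝ))))).continuousOn).congr
    (fun p hp => pdx_eq_fderiv (diffAt_of_contDiffOn1 rect_isOpen hΦ hp))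

lemma contOn_pdtR {Φ : Hyp → ℝ} (hΦ : ContDiffOn ℝ 1 Φ (Set.Ioo a b ×ˢ Set.Ioo c d)) :
    ContinuousOn (pdt Φ) (Set.Ioo a b ×ˢ Set.Ioo c d) := by
  have h2 : ContDiffOn ℝ (0+1) Φ (Set.Ioo a b ×ˢ Set.Ioo c d) := by norm_num; exact hΦ
  have h1 : ContDiffOn ℝ 0 (fderiv ℝ Φ) (Set.Ioo a b ×ˢ Set.Ioo c d) :=
    ((contDiffOn_succ_iff_fderiv_of_isOpen rect_isOpen).1 h2).2.2
  exact ((h1.clm_apply (contDiffOn_const (c := ((0:ℝ),(1:ℝ))))).continuousOn).congr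
    (fun p hp => pdt_eq_fderiv (diffAt_of_contDiffOn1 rect_isOpen hΦ hp))

/-- FTC over a horizontal strip. -/
lemma integral_pdx_slice {Φ : Hyp → ℝ} (hΦ : ContDiffOn ℝ 1 Φ (Set.Ioo a b ×ˢ Set.Ioo c d))
    {x₀ x t : ℝ} (hx₀ : x₀ ∈ Set.Ioo a b) (hx : x ∈ Set.Ioo a b) (ht : t ∈ Set.Ioo c d) :
    ∫ y in x₀..x, pdx Φ (y, t) = Φ (x, t) - Φ (x₀, t) :=
  intervalIntegral.integral_eq_sub_of_hasDerivAt (f := fun y => Φ (y, t)) (f' := fun y => pdx Φ (y, t))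
    (fun y hy => slicex_hasDerivAt
      (diffAt_of_contDiffOn1 rect_isOpen hΦ (rect_mem_slice hx₀ hx ht hy)))
    ((contOn_slice (contOn_pdxR hΦ) hx₀ hx ht).intervalIntegrable)

/-- FTC-1: derivative of `s ↦ ∫_{x₀}^s Φ(y,t) dy`. -/
lemma hasDerivAt_int_x {Φ : Hyp → ℝ} (hΦc : ContinuousOn Φ (Set.Ioo a b ×ˢ Set.Ioo c d))
    {x₀ x t : ℝ} (hx₀ : x₀ ∈ Set.Ioo a b) (hx : x ∈ Set.Ioo a b) (ht : t ∈ Set.Ioo c d) :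
    HasDerivAt (fun s => ∫ y in x₀..s, Φ (y, t)) (Φ (x, t)) x := by
  have hfull : ContinuousOn (fun y => Φ (y, t)) (Set.Ioo a b) := by
    apply hΦc.comp (by fun_prop : Continuous (fun y : ℝ => ((y, t) : Hyp))).continuousOn
    exact fun y hy => ⟨hy, ht⟩
  exact intervalIntegral.integral_hasDerivAt_right
    ((hfull.mono (Set.ordConnected_Ioo.uIcc_subset hx₀ hx)).intervalIntegrable)
    (hfull.stronglyMeasurableAtFilter isOpen_Ioo x hx)
    (hfull.continuousAt (isOpen_Ioo.mem_nhds hx))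

/-- FTC-1 in the `t` direction. -/
lemma hasDerivAt_int_t {Φ : Hyp → ℝ} (hΦc : ContinuousOn Φ (Set.Ioo a b ×ˢ Set.Ioo c d))
    {x₀ t₀ t : ℝ} (hx₀ : x₀ ∈ Set.Ioo a b) (ht₀ : t₀ ∈ Set.Ioo c d) (ht : t ∈ Set.Ioo c d) :
    HasDerivAt (fun s => ∫ ξ in t₀..s, Φ (x₀, ξ)) (Φ (x₀, t)) t := by
  have hfull : ContinuousOn (fun ξ => Φ (x₀, ξ)) (Set.Ioo c d) := by
    apply hΦc.comp (by fun_prop : Continuous (fun ξ : ℝ => ((x₀, ξ) : Hyp))).continuousOn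
    exact fun ξ hξ => ⟨hx₀, hξ⟩
  exact intervalIntegral.integral_hasDerivAt_right
    ((hfull.mono (Set.ordConnected_Ioo.uIcc_subset ht₀ ht)).intervalIntegrable)
    (hfull.stronglyMeasurableAtFilter isOpen_Ioo t ht)
    (hfull.continuousAt (isOpen_Ioo.mem_nhds ht))


section U9
variable {a b c d x₀ t₀ : ℝ} {ν f v Φ₁ Φ₂ u : Hyp → ℝ} {c₀ : ℝ}

/-- Abstract form of the second-derivative computation:
if `pdx u = (fx u + ft v)/f + vt` and `pdt u = (ft u + fx v)/f + vx` hold on the open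
rectangle (with slice `HasDerivAt` facts for `u`), then `□u = ν u`. -/
lemma waveOp_u_of_relations
    (hf : ContDiffOn ℝ 2 f (Set.Ioo a b ×ˢ Set.Ioo c d))
    (hv : ContDiffOn ℝ 2 v (Set.Ioo a b ×ˢ Set.Ioo c d))
    (hfpos : ∀ p ∈ Set.Ioo a b ×ˢ Set.Ioo c d, 0 < f p)
    (hKG : ∀ p ∈ Set.Ioo a b ×ˢ Set.Ioo c d, waveOp f p = ν p * f p)
    (hux : ∀ p ∈ Set.Ioo a b ×ˢ Set.Ioo c d, HasDerivAt (fun s => u (s, p.2))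
      ((pdx f p * u p + pdt f p * v p) / f p + pdt v p) p.1)
    (hut : ∀ p ∈ Set.Ioo a b ×ˢ Set.Ioo c d, HasDerivAt (fun s => u (p.1, s))
      ((pdt f p * u p + pdx f p * v p) / f p + pdx v p) p.2)
    {p : Hyp} (hp : p ∈ Set.Ioo a b ×ˢ Set.Ioo c d) :
    waveOp u p = ν p * u p := by
  set Ω := Set.Ioo a b ×ˢ Set.Ioo c d with hΩdef
  have hΩo : IsOpen Ω := rect_isOpen
  have hf1 : ContDiffOn ℝ 1 f Ω := hf.of_le (by norm_num)
  have hv1 : ContDiffOn ℝ 1 v Ω := hv.of_le (by norm_num)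
  have hfne : f p ≠ 0 := (hfpos p hp).ne'
  have hpdxu : ∀ q ∈ Ω, pdx u q = (pdx f q * u q + pdt f q * v q) / f q + pdt v q :=
    fun q hq => (hux q hq).deriv
  have hpdtu : ∀ q ∈ Ω, pdt u q = (pdt f q * u q + pdx f q * v q) / f q + pdx v q :=
    fun q hq => (hut q hq).deriv
  -- second derivative in x
  have hNx : HasDerivAt (fun s => pdx f (s, p.2) * u (s, p.2) + pdt f (s, p.2) * v (s, p.2))
      (pdx (pdx f) p * u p + pdx f p * ((pdx f p * u p + pdt f p * v p) / f p + pdt v p)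
        + (pdx (pdt f) p * v p + pdt f p * pdx v p)) p.1 :=
    ((slicex_hasDerivAt (diffAt_pdx hΩo hf hp)).mul (hux p hp)).add
      ((slicex_hasDerivAt (diffAt_pdt hΩo hf hp)).mul
        (slicex_hasDerivAt (diffAt_of_contDiffOn1 hΩo hv1 hp)))
  have hDx : HasDerivAt (fun s => (pdx f (s, p.2) * u (s, p.2) + pdt f (s, p.2) * v (s, p.2))
        / f (s, p.2) + pdt v (s, p.2))
      (((pdx (pdx f) p * u p + pdx f p * ((pdx f p * u p + pdt f p * v p) / f p + pdt v p)
          + (pdx (pdt f) p * v p + pdt f p * pdx v p)) * f p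
        - (pdx f p * u p + pdt f p * v p) * pdx f p) / f p ^ 2
        + pdx (pdt v) p) p.1 :=
    (hNx.div (slicex_hasDerivAt (diffAt_of_contDiffOn1 hΩo hf1 hp)) hfne).add
      (slicex_hasDerivAt (diffAt_pdt hΩo hv hp))
  have huxx : pdx (pdx u) p = ((pdx (pdx f) p * u p
      + pdx f p * ((pdx f p * u p + pdt f p * v p) / f p + pdt v p)
      + (pdx (pdt f) p * v p + pdt f p * pdx v p)) * f p
      - (pdx f p * u p + pdt f p * v p) * pdx f p) / f p ^ 2 + pdx (pdt v) p := by
    have hcongr : deriv (fun s => pdx u (s, p.2)) p.1 =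
        deriv (fun s => (pdx f (s, p.2) * u (s, p.2) + pdt f (s, p.2) * v (s, p.2))
          / f (s, p.2) + pdt v (s, p.2)) p.1 := by
      apply Filter.EventuallyEq.deriv_eq
      filter_upwards [slicex_mem_nhds hΩo hp] with s hs
      exact hpdxu (s, p.2) hs
    show deriv (fun s => pdx u (s, p.2)) p.1 = _
    rw [hcongr, hDx.deriv]
  -- second derivative in t
  have hNt : HasDerivAt (fun s => pdt f (p.1, s) * u (p.1, s) + pdx f (p.1, s) * v (p.1, s))
      (pdt (pdt f) p * u p + pdt f p * ((pdt f p * u p + pdx f p * v p) / f p + pdx v p)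
        + (pdt (pdx f) p * v p + pdx f p * pdt v p)) p.2 :=
    ((slicet_hasDerivAt (diffAt_pdt hΩo hf hp)).mul (hut p hp)).add
      ((slicet_hasDerivAt (diffAt_pdx hΩo hf hp)).mul
        (slicet_hasDerivAt (diffAt_of_contDiffOn1 hΩo hv1 hp)))
  have hDt : HasDerivAt (fun s => (pdt f (p.1, s) * u (p.1, s) + pdx f (p.1, s) * v (p.1, s))
        / f (p.1, s) + pdx v (p.1, s))
      (((pdt (pdt f) p * u p + pdt f p * ((pdt f p * u p + pdx f p * v p) / f p + pdx v p)
          + (pdt (pdx f) p * v p + pdx f p * pdt v p)) * f p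
        - (pdt f p * u p + pdx f p * v p) * pdt f p) / f p ^ 2
        + pdt (pdx v) p) p.2 :=
    (hNt.div (slicet_hasDerivAt (diffAt_of_contDiffOn1 hΩo hf1 hp)) hfne).add
      (slicet_hasDerivAt (diffAt_pdx hΩo hv hp))
  have hutt : pdt (pdt u) p = ((pdt (pdt f) p * u p
      + pdt f p * ((pdt f p * u p + pdx f p * v p) / f p + pdx v p)
      + (pdt (pdx f) p * v p + pdx f p * pdt v p)) * f p
      - (pdt f p * u p + pdx f p * v p) * pdt f p) / f p ^ 2 + pdt (pdx v) p := by
    have hcongr : deriv (fun s => pdt u (p.1, s)) p.2 =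
        deriv (fun s => (pdt f (p.1, s) * u (p.1, s) + pdx f (p.1, s) * v (p.1, s))
          / f (p.1, s) + pdx v (p.1, s)) p.2 := by
      apply Filter.EventuallyEq.deriv_eq
      filter_upwards [slicet_mem_nhds hΩo hp] with s hs
      exact hpdtu (p.1, s) hs
    show deriv (fun s => pdt u (p.1, s)) p.2 = _
    rw [hcongr, hDt.deriv]
  have hKGp := hKG p hp
  unfold waveOp at hKGp ⊢
  rw [huxx, hutt, pdx_pdt_symm hΩo hf hp, pdx_pdt_symm hΩo hv hp]
  field_simp
  linear_combination (u p * f p) * hKGp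
end U9


section U
variable {a b c d x₀ t₀ : ℝ} {ν f v Φ₁ Φ₂ u : Hyp → ℝ} {c₀ : ℝ}

lemma u_slicex (hx₀ : ((x₀, t₀) : Hyp) ∈ Set.Ioo a b ×ˢ Set.Ioo c d)
    (hf : ContDiffOn ℝ 2 f (Set.Ioo a b ×ˢ Set.Ioo c d))
    (hv : ContDiffOn ℝ 2 v (Set.Ioo a b ×ˢ Set.Ioo c d))
    (hfpos : ∀ p ∈ Set.Ioo a b ×ˢ Set.Ioo c d, 0 < f p)
    (hΦ₁ : ∀ p, Φ₁ p = -(1 / (2 * f p ^ 2)) * pdt (fun q => f q * v q) p)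
    (hu : ∀ p : Hyp, u p = -(f p) *
      (2 * ((∫ y in x₀..p.1, Φ₁ (y, p.2)) - ∫ ξ in t₀..p.2, Φ₂ (x₀, ξ)) + c₀))
    {p : Hyp} (hp : p ∈ Set.Ioo a b ×ˢ Set.Ioo c d) :
    HasDerivAt (fun s => u (s, p.2))
      ((pdx f p * u p + pdt f p * v p) / f p + pdt v p) p.1 := by
  obtain rfl : Φ₁ = _ := funext hΦ₁
  obtain ⟨hp1, hp2⟩ := hp
  have hp' : p ∈ Set.Ioo a b ×ˢ Set.Ioo c d := ⟨hp1, hp2⟩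
  have hf1 : ContDiffOn ℝ 1 f (Set.Ioo a b ×ˢ Set.Ioo c d) := hf.of_le (by norm_num)
  have hv1 : ContDiffOn ℝ 1 v (Set.Ioo a b ×ˢ Set.Ioo c d) := hv.of_le (by norm_num)
  have hfd := diffAt_of_contDiffOn1 rect_isOpen hf1 hp'
  have hvd := diffAt_of_contDiffOn1 rect_isOpen hv1 hp'
  have hΦ₁C := phi1_contDiffOn rect_isOpen hf hv hfpos
  have hfs : HasDerivAt (fun s => f (s, p.2)) (pdx f p) p.1 := slicex_hasDerivAt hfd
  have hI : HasDerivAt (fun s => ∫ y in x₀..s,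
      -(1 / (2 * f (y, p.2) ^ 2)) * pdt (fun q => f q * v q) (y, p.2))
      (-(1 / (2 * f p ^ 2)) * pdt (fun q => f q * v q) p) p.1 := by
    have := hasDerivAt_int_x (Φ := fun q => -(1 / (2 * f q ^ 2)) * pdt (fun q' => f q' * v q') q)
      hΦ₁C.continuousOn hx₀.1 hp1 hp2
    simpa using this
  have hS : HasDerivAt (fun s => 2 * ((∫ y in x₀..s,
        -(1 / (2 * f (y, p.2) ^ 2)) * pdt (fun q => f q * v q) (y, p.2))
        - ∫ ξ in t₀..p.2, Φ₂ (x₀, ξ)) + c₀)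
      (2 * (-(1 / (2 * f p ^ 2)) * pdt (fun q => f q * v q) p)) p.1 := by
    simpa using ((hI.sub_const (∫ ξ in t₀..p.2, Φ₂ (x₀, ξ))).const_mul 2).add_const c₀
  have hD := hfs.fun_neg.fun_mul hS
  have hueq : (fun s => u (s, p.2)) = fun s => -f (s, p.2) *
      (2 * ((∫ y in x₀..s, -(1 / (2 * f (y, p.2) ^ 2)) * pdt (fun q => f q * v q) (y, p.2))
        - ∫ ξ in t₀..p.2, Φ₂ (x₀, ξ)) + c₀) := funext fun s => hu (s, p.2)
  rw [hueq]
  refine hD.congr_deriv ?_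
  have hup := hu p
  have hFt := pdt_mul hfd hvd
  have hfne : f p ≠ 0 := (hfpos p hp').ne'
  rw [hFt] at *
  rw [hup]
  field_simp
  ring

lemma u_slicet (hx₀ : ((x₀, t₀) : Hyp) ∈ Set.Ioo a b ×ˢ Set.Ioo c d)
    (hf : ContDiffOn ℝ 2 f (Set.Ioo a b ×ˢ Set.Ioo c d))
    (hv : ContDiffOn ℝ 2 v (Set.Ioo a b ×ˢ Set.Ioo c d))
    (hfpos : ∀ p ∈ Set.Ioo a b ×ˢ Set.Ioo c d, 0 < f p)
    (hKG : ∀ p ∈ Set.Ioo a b ×ˢ Set.Ioo c d, waveOp f p = ν p * f p)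
    (hvKG : ∀ p ∈ Set.Ioo a b ×ˢ Set.Ioo c d, waveOp v p =
      (-ν p + 2 * ((pdx f p) ^ 2 - (pdt f p) ^ 2) / (f p) ^ 2) * v p)
    (hΦ₁ : ∀ p, Φ₁ p = -(1 / (2 * f p ^ 2)) * pdt (fun q => f q * v q) p)
    (hΦ₂ : ∀ p, Φ₂ p = (1 / (2 * f p ^ 2)) * pdx (fun q => f q * v q) p)
    (hu : ∀ p : Hyp, u p = -(f p) *
      (2 * ((∫ y in x₀..p.1, Φ₁ (y, p.2)) - ∫ ξ in t₀..p.2, Φ₂ (x₀, ξ)) + c₀))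
    {p : Hyp} (hp : p ∈ Set.Ioo a b ×ˢ Set.Ioo c d) :
    HasDerivAt (fun s => u (p.1, s))
      ((pdt f p * u p + pdx f p * v p) / f p + pdx v p) p.2 := by
  obtain rfl : Φ₁ = _ := funext hΦ₁
  obtain rfl : Φ₂ = _ := funext hΦ₂
  obtain ⟨hp1, hp2⟩ := hp
  have hp' : p ∈ Set.Ioo a b ×ˢ Set.Ioo c d := ⟨hp1, hp2⟩
  have hf1 : ContDiffOn ℝ 1 f (Set.Ioo a b ×ˢ Set.Ioo c d) := hf.of_le (by norm_num)
  have hv1 : ContDiffOn ℝ 1 v (Set.Ioo a b ×ˢ Set.Ioo c d) := hv.of_le (by norm_num)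
  have hfd := diffAt_of_contDiffOn1 rect_isOpen hf1 hp'
  have hvd := diffAt_of_contDiffOn1 rect_isOpen hv1 hp'
  have hΦ₁C := phi1_contDiffOn rect_isOpen hf hv hfpos
  have hΦ₂C := phi2_contDiffOn rect_isOpen hf hv hfpos
  have hfs : HasDerivAt (fun s => f (p.1, s)) (pdt f p) p.2 := slicet_hasDerivAt hfd
  -- derivative of the parametric integral
  have hI1 := hasDerivAt_int_param hΦ₁C (contOn_pdtR hΦ₁C) hx₀.1 hp1 hp2
  -- value of the parametric integral derivative
  have hval : (∫ y in x₀..p.1,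
      pdt (fun q => -(1 / (2 * f q ^ 2)) * pdt (fun q' => f q' * v q') q) (y, p.2)) =
      -((1 / (2 * f p ^ 2)) * pdx (fun q => f q * v q) p
        - (1 / (2 * f (x₀, p.2) ^ 2)) * pdx (fun q => f q * v q) (x₀, p.2)) := by
    have hcongr : ∀ y ∈ Set.uIcc x₀ p.1,
        pdt (fun q => -(1 / (2 * f q ^ 2)) * pdt (fun q' => f q' * v q') q) (y, p.2) =
        -(pdx (fun q => (1 / (2 * f q ^ 2)) * pdx (fun q' => f q' * v q') q) (y, p.2)) := by
      intro y hy
      have hmem := rect_mem_slice hx₀.1 hp1 hp2 hy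
      have := compat rect_isOpen hf hfpos hKG hv hvKG hmem
      linarith
    rw [intervalIntegral.integral_congr hcongr, intervalIntegral.integral_neg,
      integral_pdx_slice hΦ₂C hx₀.1 hp1 hp2]
  rw [hval] at hI1
  have hI2 : HasDerivAt (fun s => ∫ ξ in t₀..s,
      (1 / (2 * f (x₀, ξ) ^ 2)) * pdx (fun q => f q * v q) (x₀, ξ))
      ((1 / (2 * f (x₀, p.2) ^ 2)) * pdx (fun q => f q * v q) (x₀, p.2)) p.2 := by
    have := hasDerivAt_int_t (Φ := fun q => (1 / (2 * f q ^ 2)) * pdx (fun q' => f q' * v q') q)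
      hΦ₂C.continuousOn hx₀.1 hx₀.2 hp2
    simpa using this
  have hS := ((hI1.fun_sub hI2).const_mul 2).add_const c₀
  have hD := hfs.fun_neg.fun_mul hS
  have hueq : (fun s => u (p.1, s)) = fun s => -f (p.1, s) *
      (2 * ((∫ y in x₀..p.1, -(1 / (2 * f (y, s) ^ 2)) * pdt (fun q => f q * v q) (y, s))
        - ∫ ξ in t₀..s, (1 / (2 * f (x₀, ξ) ^ 2)) * pdx (fun q => f q * v q) (x₀, ξ)) + c₀) :=
    funext fun s => hu (p.1, s)
  rw [hueq]
  refine hD.congr_deriv ?_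
  have hup := hu p
  have hFx := pdx_mul hfd hvd
  have hfne : f p ≠ 0 := (hfpos p hp').ne'
  rw [hFx] at *
  rw [hup]
  field_simp
  ring
end U


/-- given a C² solution `v` of `□v = ηv` on an open rectangle `Ω`, where
`η = −ν + 2(f_x² − f_t²)/f²`, with `Φ₁ + jΦ₂ = j·f⁻²·∂_z̄(f·v)` and
`u = −f·[2(∫_{x₀}^{x} Φ₁(y,t) dy − ∫_{t₀}^{t} Φ₂(x₀,ξ) dξ) + c]`, the function
`W = u + jv` solves the main Vekua equation `W_z̄ = (f_z̄/f)W̄` on `Ω` and `u` solves the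
Klein-Gordon equation `□u = νu`; moreover `u` is unique up to an additive term `c'·f`. -/
theorem conjugate_metaharmonic_u (a b c d x₀ t₀ : ℝ) (Ω : Set Hyp)
    (hΩ : Ω = Set.Ioo a b ×ˢ Set.Ioo c d) (hz₀ : ((x₀, t₀) : Hyp) ∈ Ω)
    (ν f : Hyp → ℝ) (hf : ContDiffOn ℝ 2 f Ω) (hfpos : ∀ p ∈ Ω, 0 < f p)
    (hKG : ∀ p ∈ Ω, waveOp f p = ν p * f p)
    (v : Hyp → ℝ) (hv : ContDiffOn ℝ 2 v Ω)
    (hvKG : ∀ p ∈ Ω, waveOp v p =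
      (-ν p + 2 * ((pdx f p) ^ 2 - (pdt f p) ^ 2) / (f p) ^ 2) * v p)
    (Φ₁ Φ₂ : Hyp → ℝ)
    (hΦ₁ : ∀ p, Φ₁ p = -(1 / (2 * f p ^ 2)) * pdt (fun q => f q * v q) p)
    (hΦ₂ : ∀ p, Φ₂ p = (1 / (2 * f p ^ 2)) * pdx (fun q => f q * v q) p)
    (c₀ : ℝ) (u : Hyp → ℝ)
    (hu : ∀ p : Hyp, u p = -(f p) *
      (2 * ((∫ y in x₀..p.1, Φ₁ (y, p.2)) - ∫ ξ in t₀..p.2, Φ₂ (x₀, ξ)) + c₀)) :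
    (∀ p ∈ Ω, dzbar (fun q => ((u q, v q) : Hyp)) p =
      hmul (hdiv (rzbar f p) (f p, 0)) (hconj (u p, v p))) ∧
    (∀ p ∈ Ω, waveOp u p = ν p * u p) ∧
    (∀ u' : Hyp → ℝ, ContDiffOn ℝ 1 u' Ω →
      (∀ p ∈ Ω, dzbar (fun q => ((u' q, v q) : Hyp)) p =
        hmul (hdiv (rzbar f p) (f p, 0)) (hconj (u' p, v p))) →
      ∃ c' : ℝ, ∀ p ∈ Ω, u' p = u p + c' * f p) := by
  subst hΩ
  have hΩo : IsOpen (Set.Ioo a b ×ˢ Set.Ioo c d) := rect_isOpen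
  have hf1 : ContDiffOn ℝ 1 f (Set.Ioo a b ×ˢ Set.Ioo c d) := hf.of_le (by norm_num)
  have hv1 : ContDiffOn ℝ 1 v (Set.Ioo a b ×ˢ Set.Ioo c d) := hv.of_le (by norm_num)
  have hux : ∀ p ∈ Set.Ioo a b ×ˢ Set.Ioo c d, HasDerivAt (fun s => u (s, p.2))
      ((pdx f p * u p + pdt f p * v p) / f p + pdt v p) p.1 :=
    fun p hp => u_slicex hz₀ hf hv hfpos hΦ₁ hu hp
  have hut : ∀ p ∈ Set.Ioo a b ×ˢ Set.Ioo c d, HasDerivAt (fun s => u (p.1, s))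
      ((pdt f p * u p + pdx f p * v p) / f p + pdx v p) p.2 :=
    fun p hp => u_slicet hz₀ hf hv hfpos hKG hvKG hΦ₁ hΦ₂ hu hp
  refine ⟨?_, ?_, ?_⟩
  · -- Part 1 : the main Vekua equation
    intro p hp
    have hfne : f p ≠ 0 := (hfpos p hp).ne'
    have hA : pdx u p = (pdx f p * u p + pdt f p * v p) / f p + pdt v p := (hux p hp).deriv
    have hB : pdt u p = (pdt f p * u p + pdx f p * v p) / f p + pdx v p := (hut p hp).deriv
    have e1 : (fun q => ((u q, v q) : Hyp).1) = u := rfl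
    have e2 : (fun q => ((u q, v q) : Hyp).2) = v := rfl
    simp only [dzbar, e1, e2, hmul, hdiv, hinv, hconj, rzbar, Prod.mk.injEq]
    constructor
    · rw [hA]; field_simp; ring
    · rw [hB]; field_simp; ring
  · -- Part 2 : the Klein-Gordon equation for u
    intro p hp
    exact waveOp_u_of_relations hf hv hfpos hKG hux hut hp
  · -- Part 3 : uniqueness up to c' • f
    intro u' hu'C hW'
    have dx : ∀ q ∈ Set.Ioo a b ×ˢ Set.Ioo c d,
        pdx u' q - pdx u q = pdx f q * (u' q - u q) / f q := by
      intro q hq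
      have hfne : f q ≠ 0 := (hfpos q hq).ne'
      have h := congrArg Prod.fst (hW' q hq)
      simp only [dzbar, hmul, hdiv, hinv, hconj, rzbar] at h
      have hA : pdx u q = (pdx f q * u q + pdt f q * v q) / f q + pdt v q := (hux q hq).deriv
      field_simp at h
      have h2 : (2 * f q) * ((pdx u' q - pdt v q) * f q)
          = (2 * f q) * (pdx f q * u' q + pdt f q * v q) := by linear_combination 2 * h
      have h3 := mul_left_cancel₀ (mul_ne_zero two_ne_zero hfne) h2
      rw [hA]
      field_simp
      linear_combination h3
    have dt : ∀ q ∈ Set.Ioo a b ×ˢ Set.Ioo c d,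
        pdt u' q - pdt u q = pdt f q * (u' q - u q) / f q := by
      intro q hq
      have hfne : f q ≠ 0 := (hfpos q hq).ne'
      have h := congrArg Prod.snd (hW' q hq)
      simp only [dzbar, hmul, hdiv, hinv, hconj, rzbar] at h
      have hB : pdt u q = (pdt f q * u q + pdx f q * v q) / f q + pdx v q := (hut q hq).deriv
      field_simp at h
      have h2 : (4 * f q ^ 3) * ((pdx v q - pdt u' q) * f q)
          = (4 * f q ^ 3) * (-(pdx f q * v q) - pdt f q * u' q) := by linear_combination 4 * f q ^ 2 * h
      have h3 := mul_left_cancel₀ (by positivity : (4:ℝ) * f q ^ 3 ≠ 0) h2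
      rw [hB]
      field_simp
      linear_combination -h3
    have horiz : ∀ t ∈ Set.Ioo c d, ∀ x₁ ∈ Set.Ioo a b, ∀ x₂ ∈ Set.Ioo a b,
        (u' (x₁, t) - u (x₁, t)) / f (x₁, t) = (u' (x₂, t) - u (x₂, t)) / f (x₂, t) := by
      intro t ht x₁ hx₁ x₂ hx₂
      have key : ∀ s ∈ Set.uIcc x₁ x₂,
          HasDerivAt (fun s' => (u' (s', t) - u (s', t)) / f (s', t)) 0 s := by
        intro s hs
        have hq : ((s, t) : Hyp) ∈ Set.Ioo a b ×ˢ Set.Ioo c d := rect_mem_slice hx₁ hx₂ ht hs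
        have hfne : f (s, t) ≠ 0 := (hfpos _ hq).ne'
        have h1 : HasDerivAt (fun s' => u' (s', t)) (pdx u' (s, t)) s :=
          slicex_hasDerivAt (diffAt_of_contDiffOn1 hΩo hu'C hq)
        have h2 := hux (s, t) hq
        have h3 : HasDerivAt (fun s' => f (s', t)) (pdx f (s, t)) s :=
          slicex_hasDerivAt (diffAt_of_contDiffOn1 hΩo hf1 hq)
        have hD := (h1.fun_sub h2).fun_div h3 hfne
        have hA : pdx u (s, t) = (pdx f (s, t) * u (s, t) + pdt f (s, t) * v (s, t)) / f (s, t)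
            + pdt v (s, t) := h2.deriv
        have hdx := dx (s, t) hq
        have hval : ((pdx u' (s, t) - ((pdx f (s, t) * u (s, t) + pdt f (s, t) * v (s, t))
            / f (s, t) + pdt v (s, t))) * f (s, t)
            - (u' (s, t) - u (s, t)) * pdx f (s, t)) / f (s, t) ^ 2 = 0 := by
          rw [← hA]
          field_simp
          field_simp at hdx
          linarith [hdx]
        rw [hval] at hD
        exact hD
      have hicc : Set.uIcc x₁ x₂ = Set.Icc (x₁ ⊓ x₂) (x₁ ⊔ x₂) := rfl
      have hconst := constant_of_has_deriv_right_zero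
        (f := fun s' => (u' (s', t) - u (s', t)) / f (s', t)) (a := x₁ ⊓ x₂) (b := x₁ ⊔ x₂)
        (fun s hs => ((key s (by rw [hicc]; exact hs)).continuousAt).continuousWithinAt)
        (fun s hs => ((key s (by rw [hicc]; exact Set.Ico_subset_Icc_self hs)).hasDerivWithinAt))
      exact (hconst x₁ ⟨inf_le_left, le_sup_left⟩).trans
        (hconst x₂ ⟨inf_le_right, le_sup_right⟩).symm
    have vert : ∀ t₁ ∈ Set.Ioo c d, ∀ t₂ ∈ Set.Ioo c d,
        (u' (x₀, t₁) - u (x₀, t₁)) / f (x₀, t₁) = (u' (x₀, t₂) - u (x₀, t₂)) / f (x₀, t₂) := by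
      intro t₁ ht₁ t₂ ht₂
      have key : ∀ s ∈ Set.uIcc t₁ t₂,
          HasDerivAt (fun s' => (u' (x₀, s') - u (x₀, s')) / f (x₀, s')) 0 s := by
        intro s hs
        have hq : ((x₀, s) : Hyp) ∈ Set.Ioo a b ×ˢ Set.Ioo c d :=
          ⟨hz₀.1, Set.ordConnected_Ioo.uIcc_subset ht₁ ht₂ hs⟩
        have hfne : f (x₀, s) ≠ 0 := (hfpos _ hq).ne'
        have h1 : HasDerivAt (fun s' => u' (x₀, s')) (pdt u' (x₀, s)) s :=
          slicet_hasDerivAt (diffAt_of_contDiffOn1 hΩo hu'C hq)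
        have h2 := hut (x₀, s) hq
        have h3 : HasDerivAt (fun s' => f (x₀, s')) (pdt f (x₀, s)) s :=
          slicet_hasDerivAt (diffAt_of_contDiffOn1 hΩo hf1 hq)
        have hD := (h1.fun_sub h2).fun_div h3 hfne
        have hB : pdt u (x₀, s) = (pdt f (x₀, s) * u (x₀, s) + pdx f (x₀, s) * v (x₀, s))
            / f (x₀, s) + pdx v (x₀, s) := h2.deriv
        have hdt := dt (x₀, s) hq
        have hval : ((pdt u' (x₀, s) - ((pdt f (x₀, s) * u (x₀, s) + pdx f (x₀, s) * v (x₀, s))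
            / f (x₀, s) + pdx v (x₀, s))) * f (x₀, s)
            - (u' (x₀, s) - u (x₀, s)) * pdt f (x₀, s)) / f (x₀, s) ^ 2 = 0 := by
          rw [← hB]
          field_simp
          field_simp at hdt
          linarith [hdt]
        rw [hval] at hD
        exact hD
      have hicc : Set.uIcc t₁ t₂ = Set.Icc (t₁ ⊓ t₂) (t₁ ⊔ t₂) := rfl
      have hconst := constant_of_has_deriv_right_zero
        (f := fun s' => (u' (x₀, s') - u (x₀, s')) / f (x₀, s')) (a := t₁ ⊓ t₂) (b := t₁ ⊔ t₂)
        (fun s hs => ((key s (by rw [hicc]; exact hs)).continuousAt).continuousWithinAt)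
        (fun s hs => ((key s (by rw [hicc]; exact Set.Ico_subset_Icc_self hs)).hasDerivWithinAt))
      exact (hconst t₁ ⟨inf_le_left, le_sup_left⟩).trans
        (hconst t₂ ⟨inf_le_right, le_sup_right⟩).symm
    refine ⟨(u' (x₀, t₀) - u (x₀, t₀)) / f (x₀, t₀), ?_⟩
    intro p hp
    have h1 := horiz p.2 hp.2 p.1 hp.1 x₀ hz₀.1
    have h2 := vert p.2 hp.2 t₀ hz₀.2
    have hfne : f p ≠ 0 := (hfpos p hp).ne'
    have hchain : (u' p - u p) / f p = (u' (x₀, t₀) - u (x₀, t₀)) / f (x₀, t₀) := by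
      calc (u' p - u p) / f p = (u' (p.1, p.2) - u (p.1, p.2)) / f (p.1, p.2) := rfl
        _ = (u' (x₀, p.2) - u (x₀, p.2)) / f (x₀, p.2) := h1
        _ = (u' (x₀, t₀) - u (x₀, t₀)) / f (x₀, t₀) := h2
    field_simp at hchain
    linear_combination hchain
end
end

section
/- Let Ω ⊆ ℝ² be open and let ρ : Ω → ℝ be twice continuously differentiable with ρ_x² − ρ_t² ≠ 0 on Ω. Suppose there is a continuously differentiable function s : ℝ → ℝ such that s(ρ(x,t)) = (ρ_xx − ρ_tt)/(ρ_x² − ρ_t²) on Ω (note 4|ρ_z|² = ρ_x² − ρ_t²), and let S : ℝ → ℝ be an antiderivative of s. Then the 𝔻-valued function Φ = j·e^{−S(ρ)}·ρ_z, i.e. Φ(x,t) = j·e^{−S(ρ(x,t))}·½(ρ_x + jρ_t), satisfies ∂_z̄Φ = 0 on Ω (Φ is hyperbolic analytic). -/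
noncomputable section

open Filter Topology MeasureTheory

lemma sliceX {F : Type*} [NormedAddCommGroup F] [NormedSpace ℝ F]
    {g : Hyp → F} {L : Hyp →L[ℝ] F} {x t : ℝ} (h : HasFDerivAt g L (x, t)) :
    HasDerivAt (fun s => g (s, t)) (L (1, 0)) x := by
  have h1 : HasDerivAt (fun s : ℝ => ((s, t) : Hyp)) ((1 : ℝ), (0 : ℝ)) x :=
    (hasDerivAt_id x).prodMk (hasDerivAt_const x t)
  exact h.comp_hasDerivAt x h1

lemma sliceT {F : Type*} [NormedAddCommGroup F] [NormedSpace ℝ F]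
    {g : Hyp → F} {L : Hyp →L[ℝ] F} {x t : ℝ} (h : HasFDerivAt g L (x, t)) :
    HasDerivAt (fun s => g (x, s)) (L (0, 1)) t := by
  have h1 : HasDerivAt (fun s : ℝ => ((x, s) : Hyp)) ((0 : ℝ), (1 : ℝ)) t :=
    (hasDerivAt_const t x).prodMk (hasDerivAt_id t)
  exact h.comp_hasDerivAt t h1

/-- if `ρ ∈ C²(Ω)` has `ρ_x² − ρ_t² ≠ 0`, `s ∈ C¹(ℝ)` satisfies
`s(ρ) = (ρ_xx − ρ_tt)/(ρ_x² − ρ_t²)` on `Ω` and `S` is an antiderivative of `s`, then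
`Φ = j·e^{−S(ρ)}·ρ_z` satisfies `∂_z̄Φ = 0` on `Ω` (it is hyperbolic analytic). -/
theorem Phi_is_hyperbolic_analytic (Ω : Set Hyp) (hΩ : IsOpen Ω)
    (ρ : Hyp → ℝ) (hρ : ContDiffOn ℝ 2 ρ Ω)
    (hnd : ∀ p ∈ Ω, (pdx ρ p) ^ 2 - (pdt ρ p) ^ 2 ≠ 0)
    (s S : ℝ → ℝ) (hs : ContDiff ℝ 1 s)
    (hsρ : ∀ p ∈ Ω, s (ρ p) = waveOp ρ p / ((pdx ρ p) ^ 2 - (pdt ρ p) ^ 2))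
    (hS : ∀ x : ℝ, HasDerivAt S (s x) x)
    (Φ : Hyp → Hyp)
    (hΦ : ∀ p, Φ p = ((Real.exp (-S (ρ p)) * (pdt ρ p / 2),
      Real.exp (-S (ρ p)) * (pdx ρ p / 2)) : Hyp)) :
    ∀ p ∈ Ω, dzbar Φ p = 0 := by
  intro p hp
  obtain ⟨x, t⟩ := p
  have hpn : Ω ∈ 𝓝 ((x, t) : Hyp) := hΩ.mem_nhds hp
  have hev : ∀ᶠ q in 𝓝 ((x, t) : Hyp), HasFDerivAt ρ (fderiv ℝ ρ q) q := by
    filter_upwards [hpn] with q hq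
    exact ((hρ.contDiffAt (hΩ.mem_nhds hq)).differentiableAt (by norm_num)).hasFDerivAt
  have hρ2 : ContDiffAt ℝ 2 ρ (x, t) := hρ.contDiffAt hpn
  have hL : HasFDerivAt ρ (fderiv ℝ ρ (x, t)) (x, t) :=
    (hρ2.differentiableAt (by norm_num)).hasFDerivAt
  set L := fderiv ℝ ρ (x, t) with hLdef
  have hdf : ContDiffAt ℝ 1 (fderiv ℝ ρ) (x, t) := hρ2.fderiv_right (by norm_num)
  have hQ : HasFDerivAt (fderiv ℝ ρ) (fderiv ℝ (fderiv ℝ ρ) (x, t)) (x, t) :=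
    (hdf.differentiableAt one_ne_zero).hasFDerivAt
  set Q := fderiv ℝ (fderiv ℝ ρ) (x, t) with hQdef
  have hsymm : Q (1, 0) (0, 1) = Q (0, 1) (1, 0) :=
    second_derivative_symmetric_of_eventually hev hQ _ _
  have happ : ∀ v : Hyp, HasFDerivAt (fun q => fderiv ℝ ρ q v)
      ((ContinuousLinearMap.apply ℝ ℝ v).comp Q) (x, t) :=
    fun v => ((ContinuousLinearMap.apply ℝ ℝ v).hasFDerivAt).comp _ hQ
  have hXV : ∀ v : Hyp, HasDerivAt (fun s => fderiv ℝ ρ (s, t) v) (Q (1, 0) v) x :=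
    fun v => sliceX (happ v)
  have hTV : ∀ v : Hyp, HasDerivAt (fun s => fderiv ℝ ρ (x, s) v) (Q (0, 1) v) t :=
    fun v => sliceT (happ v)
  -- pdx/pdt agree with fderiv applications near p
  have hpdx_ev : ∀ᶠ q in 𝓝 ((x, t) : Hyp), pdx ρ q = fderiv ℝ ρ q (1, 0) := by
    filter_upwards [hev] with q hq
    obtain ⟨a, b⟩ := q
    exact (sliceX hq).deriv
  have hpdt_ev : ∀ᶠ q in 𝓝 ((x, t) : Hyp), pdt ρ q = fderiv ℝ ρ q (0, 1) := by
    filter_upwards [hev] with q hq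
    obtain ⟨a, b⟩ := q
    exact (sliceT hq).deriv
  have hcx : Filter.Tendsto (fun s : ℝ => ((s, t) : Hyp)) (𝓝 x) (𝓝 ((x, t) : Hyp)) :=
    (continuous_id.prodMk continuous_const).tendsto x
  have hct : Filter.Tendsto (fun s : ℝ => ((x, s) : Hyp)) (𝓝 t) (𝓝 ((x, t) : Hyp)) :=
    (continuous_const.prodMk continuous_id).tendsto t
  -- second-order slice derivatives
  have hslice_pdt_x : HasDerivAt (fun s => pdt ρ (s, t)) (Q (1, 0) (0, 1)) x :=
    (hXV (0, 1)).congr_of_eventuallyEq (hcx.eventually hpdt_ev)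
  have hslice_pdx_x : HasDerivAt (fun s => pdx ρ (s, t)) (Q (1, 0) (1, 0)) x :=
    (hXV (1, 0)).congr_of_eventuallyEq (hcx.eventually hpdx_ev)
  have hslice_pdt_t : HasDerivAt (fun s => pdt ρ (x, s)) (Q (0, 1) (0, 1)) t :=
    (hTV (0, 1)).congr_of_eventuallyEq (hct.eventually hpdt_ev)
  have hslice_pdx_t : HasDerivAt (fun s => pdx ρ (x, s)) (Q (0, 1) (1, 0)) t :=
    (hTV (1, 0)).congr_of_eventuallyEq (hct.eventually hpdx_ev)
  have wav : waveOp ρ (x, t) = Q (1, 0) (1, 0) - Q (0, 1) (0, 1) := by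
    unfold waveOp
    rw [show pdx (pdx ρ) (x, t) = Q (1, 0) (1, 0) from hslice_pdx_x.deriv,
      show pdt (pdt ρ) (x, t) = Q (0, 1) (0, 1) from hslice_pdt_t.deriv]
  -- first-order slice derivatives
  have hρX : HasDerivAt (fun s => ρ (s, t)) (L (1, 0)) x := sliceX hL
  have hρT : HasDerivAt (fun s => ρ (x, s)) (L (0, 1)) t := sliceT hL
  have hpx : pdx ρ (x, t) = L (1, 0) := hρX.deriv
  have hpt : pdt ρ (x, t) = L (0, 1) := hρT.deriv
  -- exponential chains
  have hEx : HasDerivAt (fun s' => Real.exp (-S (ρ (s', t))))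
      (Real.exp (-S (ρ (x, t))) * -(s (ρ (x, t)) * L (1, 0))) x := by
    have h1 : HasDerivAt (fun s' => -S (ρ (s', t))) (-(s (ρ (x, t)) * L (1, 0))) x :=
      ((hS (ρ (x, t))).comp x hρX).neg
    exact (Real.hasDerivAt_exp (-S (ρ (x, t)))).comp x h1
  have hEt : HasDerivAt (fun s' => Real.exp (-S (ρ (x, s'))))
      (Real.exp (-S (ρ (x, t))) * -(s (ρ (x, t)) * L (0, 1))) t := by
    have h1 : HasDerivAt (fun s' => -S (ρ (x, s'))) (-(s (ρ (x, t)) * L (0, 1))) t :=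
      ((hS (ρ (x, t))).comp t hρT).neg
    exact (Real.hasDerivAt_exp (-S (ρ (x, t)))).comp t h1
  set E := Real.exp (-S (ρ (x, t))) with hEdef
  set c := s (ρ (x, t)) with hcdef
  -- the four partial derivatives of the components of Φ
  have hu_x : HasDerivAt (fun s' => Real.exp (-S (ρ (s', t))) * (pdt ρ (s', t) / 2))
      (E * -(c * L (1, 0)) * (pdt ρ (x, t) / 2) + E * (Q (1, 0) (0, 1) / 2)) x :=
    hEx.mul (hslice_pdt_x.div_const 2)
  have hv_x : HasDerivAt (fun s' => Real.exp (-S (ρ (s', t))) * (pdx ρ (s', t) / 2))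
      (E * -(c * L (1, 0)) * (pdx ρ (x, t) / 2) + E * (Q (1, 0) (1, 0) / 2)) x :=
    hEx.mul (hslice_pdx_x.div_const 2)
  have hu_t : HasDerivAt (fun s' => Real.exp (-S (ρ (x, s'))) * (pdt ρ (x, s') / 2))
      (E * -(c * L (0, 1)) * (pdt ρ (x, t) / 2) + E * (Q (0, 1) (0, 1) / 2)) t :=
    hEt.mul (hslice_pdt_t.div_const 2)
  have hv_t : HasDerivAt (fun s' => Real.exp (-S (ρ (x, s'))) * (pdx ρ (x, s') / 2))
      (E * -(c * L (0, 1)) * (pdx ρ (x, t) / 2) + E * (Q (0, 1) (1, 0) / 2)) t :=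
    hEt.mul (hslice_pdx_t.div_const 2)
  have h1 : pdx (fun q => (Φ q).1) (x, t)
      = E * -(c * L (1, 0)) * (pdt ρ (x, t) / 2) + E * (Q (1, 0) (0, 1) / 2) := by
    show deriv (fun s' => (Φ (s', t)).1) x = _
    simp only [hΦ]
    exact hu_x.deriv
  have h2 : pdx (fun q => (Φ q).2) (x, t)
      = E * -(c * L (1, 0)) * (pdx ρ (x, t) / 2) + E * (Q (1, 0) (1, 0) / 2) := by
    show deriv (fun s' => (Φ (s', t)).2) x = _
    simp only [hΦ]
    exact hv_x.deriv
  have h3 : pdt (fun q => (Φ q).1) (x, t)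
      = E * -(c * L (0, 1)) * (pdt ρ (x, t) / 2) + E * (Q (0, 1) (0, 1) / 2) := by
    show deriv (fun s' => (Φ (x, s')).1) t = _
    simp only [hΦ]
    exact hu_t.deriv
  have h4 : pdt (fun q => (Φ q).2) (x, t)
      = E * -(c * L (0, 1)) * (pdx ρ (x, t) / 2) + E * (Q (0, 1) (1, 0) / 2) := by
    show deriv (fun s' => (Φ (x, s')).2) t = _
    simp only [hΦ]
    exact hv_t.deriv
  have hne := hnd (x, t) hp
  have hceq := hsρ (x, t) hp
  rw [hpx, hpt] at hne
  rw [wav, hpx, hpt] at hceq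
  rw [← hcdef] at hceq
  have key : c * (L (1, 0) ^ 2 - L (0, 1) ^ 2) = Q (1, 0) (1, 0) - Q (0, 1) (0, 1) := by
    field_simp at hceq
    linarith [hceq]
  show ((pdx (fun q => (Φ q).1) (x, t) - pdt (fun q => (Φ q).2) (x, t)) / 2,
      (pdx (fun q => (Φ q).2) (x, t) - pdt (fun q => (Φ q).1) (x, t)) / 2) = ((0 : ℝ), (0 : ℝ))
  rw [h1, h2, h3, h4, hpx, hpt]
  refine Prod.ext ?_ ?_
  · show (_ : ℝ) = 0
    rw [hsymm]
    ring
  · show (_ : ℝ) = 0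
    linear_combination (-E / 4) * key
end
end
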